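/- Let (G,N) be an equal order pair. Then either N is nilpotent, or every nilpotent normal subgroup of G is contained in N. Moreover, if N is nilpotent and there exists a nilpotent normal subgroup of G not contained in N, then there is a prime p such that every nilpotent normal subgroup of G is a p-group; equivalently, if N is properly contained in the Fitting subgroup F(G), then F(G) has prime-power order. -/
import Mathlib


/-- `(G, N)` is an *equal order pair* if `N` is a proper, nontrivial, normal subgroup of `G`
and for every `x ∈ G \ N` and every `n ∈ N`, the order of `x * n` equals the order of `x`. -/
def IsEqualOrderPair {G : Type*} [Group G] (N : Subgroup G) : Prop :=
  N.Normal ∧ N ≠ ⊥ ∧ N ≠ ⊤ ∧ ∀ x ∉ N, ∀ n ∈ N, orderOf (x * n) = orderOf x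

section Aux

variable {G : Type*} [Group G] [Finite G]

open Subgroup

/-- If every prime-power order element of `zpowers x` lies in `N`, then `x ∈ N`. -/
lemma mem_of_all_primepow (N : Subgroup G) :
    ∀ (m : ℕ) (x : G), orderOf x = m →
      (∀ y ∈ Subgroup.zpowers x, IsPrimePow (orderOf y) → y ∈ N) → x ∈ N := by
  intro m
  induction m using Nat.strong_induction_on with
  | _ m ih =>
    intro x hm hyp
    have hm0 : m ≠ 0 := by
      rw [← hm]; exact (orderOf_pos x).ne'
    by_cases h1 : m = 1
    · have : x = 1 := orderOf_eq_one_iff.mp (by rw [hm, h1])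
      exact this ▸ N.one_mem
    by_cases hpp : IsPrimePow m
    · exact hyp x (Subgroup.mem_zpowers x) (by rwa [hm])
    -- m has at least two prime factors
    obtain ⟨p, hp, hpdvd⟩ := Nat.exists_prime_and_dvd h1
    set k := m.factorization p with hk
    set s := p ^ k with hs
    set t := ordCompl[p] m with ht
    have hst : s * t = m := Nat.ordProj_mul_ordCompl_eq_self m p
    have hsdvd : s ∣ m := ⟨t, hst.symm⟩
    have htdvd : t ∣ m := Nat.ordCompl_dvd m p
    have hkpos : 0 < k := hp.factorization_pos_of_dvd hm0 hpdvd
    have hspp : IsPrimePow s := ⟨p, k, hp.prime, hkpos, rfl⟩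
    have ht0 : 0 < t := Nat.ordCompl_pos p hm0
    have hs1 : 1 < s := Nat.one_lt_pow hkpos.ne' hp.one_lt
    have htm : t < m := by
      rw [← hst]
      exact lt_mul_of_one_lt_left ht0 hs1
    have hcop : Nat.Coprime s t := Nat.Coprime.pow_left k (Nat.coprime_ordCompl hp hm0)
    -- orders of powers
    have hordxt : orderOf (x ^ t) = s := by
      rw [orderOf_pow, hm, Nat.gcd_eq_right htdvd]
      exact Nat.div_eq_of_eq_mul_left ht0 hst.symm
    have hordxs : orderOf (x ^ s) ∣ t := by
      rw [orderOf_pow, hm, Nat.gcd_eq_right hsdvd,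
        Nat.div_eq_of_eq_mul_right (zero_lt_one.trans hs1) hst.symm]
    have hxt : x ^ t ∈ N :=
      hyp (x ^ t) (Subgroup.pow_mem _ (Subgroup.mem_zpowers x) t) (by rwa [hordxt])
    have hxs : x ^ s ∈ N := by
      refine ih (orderOf (x ^ s)) (lt_of_le_of_lt (Nat.le_of_dvd ht0 hordxs) htm) (x ^ s) rfl ?_
      intro y hy hppy
      exact hyp y (Subgroup.zpowers_le.mpr (Subgroup.pow_mem _ (Subgroup.mem_zpowers x) s) hy) hppy
    -- Bezout
    have hicop : IsCoprime (s : ℤ) (t : ℤ) := Int.isCoprime_iff_gcd_eq_one.mpr hcop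
    obtain ⟨u, v, huv⟩ := hicop
    have key : (x ^ s) ^ u * (x ^ t) ^ v = x := by
      rw [← zpow_natCast x s, ← zpow_natCast x t, ← zpow_mul, ← zpow_mul, ← zpow_add,
        mul_comm (s : ℤ) u, mul_comm (t : ℤ) v, huv, zpow_one]
    exact key ▸ N.mul_mem (N.zpow_mem hxs u) (N.zpow_mem hxt v)

lemma exists_primepow_not_mem (N : Subgroup G) {x : G} (hx : x ∉ N) :
    ∃ y ∈ Subgroup.zpowers x, y ∉ N ∧ IsPrimePow (orderOf y) := by
  by_contra hcon
  push_neg at hcon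
  exact hx (mem_of_all_primepow N (orderOf x) x rfl fun y hy hppy => by
    by_contra hyN
    exact hcon y hy hyN hppy)

/-- a `p`-element of a nilpotent normal subgroup lies in a normal `p`-subgroup of `G`. -/
lemma mem_normal_pgroup {M : Subgroup G} (hMn : M.Normal) (hMnil : Group.IsNilpotent ↥M)
    {p : ℕ} (hp : p.Prime) {y : G} (hyM : y ∈ M) (hy : ∃ k, y ^ p ^ k = 1) :
    ∃ P : Subgroup G, P.Normal ∧ IsPGroup p ↥P ∧ y ∈ P := by
  haveI : Fact p.Prime := ⟨hp⟩
  haveI := hMn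
  obtain ⟨Q⟩ : Nonempty (Sylow p ↥M) := inferInstance
  have hQnorm : (Q : Subgroup ↥M).Normal := by
    have tfae := isNilpotent_of_finite_tfae (G := ↥M)
    have h4 := (tfae.out 0 3).mp hMnil
    exact h4 p ⟨hp⟩ Q
  haveI := hQnorm
  haveI : (Q : Subgroup ↥M).Characteristic := Sylow.characteristic_of_normal Q hQnorm
  refine ⟨(Q : Subgroup ↥M).map M.subtype, inferInstance, Q.isPGroup'.map _, ?_⟩
  -- y ∈ Q
  have hy' : ∃ k, (⟨y, hyM⟩ : ↥M) ^ p ^ k = 1 := by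
    obtain ⟨k, hk⟩ := hy
    exact ⟨k, Subtype.ext (by simpa using hk)⟩
  have hzp : IsPGroup p (Subgroup.zpowers (⟨y, hyM⟩ : ↥M)) := by
    obtain ⟨k, hk⟩ := hy'
    rintro ⟨z, hz⟩
    obtain ⟨j, rfl⟩ := hz
    refine ⟨k, Subtype.ext ?_⟩
    push_cast
    rw [← zpow_natCast, ← zpow_mul, mul_comm, zpow_mul, zpow_natCast, hk, one_zpow]
  obtain ⟨Q', hQ'⟩ := hzp.exists_le_sylow
  haveI := Sylow.unique_of_normal Q hQnorm
  have : Q' = Q := Subsingleton.elim _ _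
  rw [this] at hQ'
  exact ⟨⟨y, hyM⟩, hQ' (Subgroup.mem_zpowers _), rfl⟩

lemma eq_one_of_coprime {N : Subgroup G} (h : IsEqualOrderPair N) {P : Subgroup G}
    (hPn : P.Normal) {p : ℕ} (hP : IsPGroup p ↥P) {x : G} (hxP : x ∈ P) (hxN : x ∉ N)
    {n : G} (hn : n ∈ N) (hcop : Nat.Coprime (orderOf n) p) : n = 1 := by
  haveI := hPn
  obtain ⟨k, hk⟩ := hP ⟨x, hxP⟩
  have hk' : x ^ p ^ k = 1 := by simpa using congrArg Subtype.val hk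
  have hordx : orderOf x ∣ p ^ k := orderOf_dvd_of_pow_eq_one hk'
  have heq := h.2.2.2 x hxN n hn
  set φ := QuotientGroup.mk' P with hφ
  have hφx : φ x = 1 := (QuotientGroup.eq_one_iff x).mpr hxP
  have h1 : orderOf (φ n) ∣ p ^ k := by
    have hxn : φ n = φ (x * n) := by rw [map_mul, hφx, one_mul]
    rw [hxn]
    exact (orderOf_map_dvd φ (x * n)).trans (heq ▸ hordx)
  have h2 : orderOf (φ n) ∣ orderOf n := orderOf_map_dvd φ n
  have hc : Nat.Coprime (orderOf (φ n)) (p ^ k) := ((hcop.pow_right k)).coprime_dvd_left h2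
  have h3 : orderOf (φ n) = 1 := by
    rw [← Nat.gcd_eq_left h1]; exact hc
  have hnP : n ∈ P := (QuotientGroup.eq_one_iff n).mp (orderOf_eq_one_iff.mp h3)
  obtain ⟨j, hj⟩ := hP ⟨n, hnP⟩
  have hj' : n ^ p ^ j = 1 := by simpa using congrArg Subtype.val hj
  have hdn : orderOf n ∣ p ^ j := orderOf_dvd_of_pow_eq_one hj'
  have : orderOf n = 1 := by
    rw [← Nat.gcd_eq_left hdn]; exact hcop.pow_right j
  exact orderOf_eq_one_iff.mp this

lemma isPGroup_N {N : Subgroup G} (h : IsEqualOrderPair N) {P : Subgroup G}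
    (hPn : P.Normal) {p : ℕ} (hp : p.Prime) (hP : IsPGroup p ↥P) {x : G} (hxP : x ∈ P)
    (hxN : x ∉ N) : IsPGroup p ↥N := by
  intro n
  set m := orderOf (n : G) with hmdef
  have hm0 : m ≠ 0 := (orderOf_pos _).ne'
  set k := m.factorization p with hk
  refine ⟨k, Subtype.ext ?_⟩
  push_cast
  have hdvd : p ^ k ∣ m := Nat.ordProj_dvd m p
  have hordpow : orderOf ((n : G) ^ p ^ k) = ordCompl[p] m := by
    rw [orderOf_pow, ← hmdef, Nat.gcd_eq_right hdvd]
  have hcop : Nat.Coprime (orderOf ((n : G) ^ p ^ k)) p := by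
    rw [hordpow]
    exact (Nat.coprime_ordCompl hp hm0).symm
  exact eq_one_of_coprime h hPn hP hxP hxN (N.pow_mem n.2 _) hcop

lemma isPGroup_of_nilpotent_normal {N : Subgroup G} (h : IsEqualOrderPair N) {p : ℕ}
    (hp : p.Prime) (hN : IsPGroup p ↥N) (M' : Subgroup G) (hM'n : M'.Normal)
    (hM'nil : Group.IsNilpotent ↥M') : IsPGroup p ↥M' := by
  intro y
  set m := orderOf (y : G) with hmdef
  have hm0 : m ≠ 0 := (orderOf_pos _).ne'
  refine ⟨m.factorization p, Subtype.ext ?_⟩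
  push_cast
  suffices hs : ordCompl[p] m = 1 by
    have hmp : m = p ^ m.factorization p := by
      conv_lhs => rw [← Nat.ordProj_mul_ordCompl_eq_self m p]
      rw [hs, mul_one]
    rw [← hmp, hmdef]
    exact pow_orderOf_eq_one _
  by_contra hr
  obtain ⟨q, hq, hqdvd⟩ := Nat.exists_prime_and_dvd hr
  have hq_ne : q ≠ p := fun e => Nat.not_dvd_ordCompl hp hm0 (e ▸ hqdvd)
  have hqm : q ∣ m := hqdvd.trans (Nat.ordCompl_dvd m p)
  set y' := (y : G) ^ (m / q) with hy'def
  have h1 : m / q ∣ m := Nat.div_dvd_of_dvd hqm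
  have hy'ord : orderOf y' = q := by
    rw [hy'def, orderOf_pow, ← hmdef, Nat.gcd_eq_right h1, Nat.div_div_self hqm hm0]
  have hy'M : y' ∈ M' := M'.pow_mem y.2 _
  have hy'N : y' ∉ N := by
    intro hmem
    obtain ⟨j, hj⟩ := hN ⟨y', hmem⟩
    have hj' : y' ^ p ^ j = 1 := by simpa using congrArg Subtype.val hj
    have : q ∣ p ^ j := hy'ord ▸ orderOf_dvd_of_pow_eq_one hj'
    exact hq_ne ((Nat.prime_dvd_prime_iff_eq hq hp).mp (hq.dvd_of_dvd_pow this))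
  obtain ⟨P', hP'n, hP'p, hy'P'⟩ := mem_normal_pgroup hM'n hM'nil hq hy'M
    ⟨1, by rw [pow_one, ← hy'ord]; exact pow_orderOf_eq_one y'⟩
  obtain ⟨n₀, hn₀1⟩ := Subgroup.ne_bot_iff_exists_ne_one.mp h.2.1
  have hcop : Nat.Coprime (orderOf (n₀ : G)) q := by
    obtain ⟨j, hj⟩ := hN n₀
    have hj' : (n₀ : G) ^ p ^ j = 1 := by simpa using congrArg Subtype.val hj
    have hdvd : orderOf (n₀ : G) ∣ p ^ j := orderOf_dvd_of_pow_eq_one hj'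
    exact Nat.Coprime.coprime_dvd_left hdvd
      (Nat.Coprime.pow_left j ((Nat.coprime_primes hp hq).mpr (Ne.symm hq_ne)))
  have := eq_one_of_coprime h hP'n hP'p hy'P' hy'N n₀.2 hcop
  exact hn₀1 (Subtype.ext this)

end Aux

theorem stmt10 {G : Type*} [Group G] [Finite G] (N : Subgroup G)
    (h : IsEqualOrderPair N) :
    (Group.IsNilpotent ↥N ∨
      ∀ M : Subgroup G, M.Normal → Group.IsNilpotent ↥M → M ≤ N) ∧
    (Group.IsNilpotent ↥N →
      (∃ M : Subgroup G, M.Normal ∧ Group.IsNilpotent ↥M ∧ ¬ M ≤ N) →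
      ∃ p : ℕ, p.Prime ∧
        ∀ M : Subgroup G, M.Normal → Group.IsNilpotent ↥M → IsPGroup p ↥M) := by
  have main : ∀ M : Subgroup G, M.Normal → Group.IsNilpotent ↥M → ¬ M ≤ N →
      ∃ p : ℕ, p.Prime ∧ IsPGroup p ↥N := by
    intro M hMn hMnil hMle
    obtain ⟨x0, hx0M, hx0N⟩ := SetLike.not_le_iff_exists.mp hMle
    obtain ⟨y, hyzp, hyN, hypp⟩ := exists_primepow_not_mem N hx0N
    obtain ⟨p, a, hp, ha, hord⟩ := hypp
    have hp' : p.Prime := hp.nat_prime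
    have hyM : y ∈ M := Subgroup.zpowers_le.mpr hx0M hyzp
    have hy : ∃ k, y ^ p ^ k = 1 := ⟨a, by rw [hord]; exact pow_orderOf_eq_one y⟩
    obtain ⟨P, hPn, hPp, hyP⟩ := mem_normal_pgroup hMn hMnil hp' hyM hy
    exact ⟨p, hp', isPGroup_N h hPn hp' hPp hyP hyN⟩
  constructor
  · by_cases hall : ∀ M : Subgroup G, M.Normal → Group.IsNilpotent ↥M → M ≤ N
    · exact Or.inr hall
    · push_neg at hall
      obtain ⟨M, hMn, hMnil, hMle⟩ := hall
      obtain ⟨p, hp, hN⟩ := main M hMn hMnil hMle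
      haveI : Fact p.Prime := ⟨hp⟩
      exact Or.inl hN.isNilpotent
  · intro _ ⟨M, hMn, hMnil, hMle⟩
    obtain ⟨p, hp, hN⟩ := main M hMn hMnil hMle
    exact ⟨p, hp, fun M' hM'n hM'nil => isPGroup_of_nilpotent_normal h hp hN M' hM'n hM'nil⟩
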